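/- Let X be a nested almost convex set with convex layers R_1, …, R_k. Then for every 1 ≤ j ≤ k−1, |R_{j+1}| = |X_j| + 2, where X_j = R_1 ∪ ⋯ ∪ R_j is the set of points of X lying in the first j layers. -/

import Mathlib

open Set

noncomputable section

/-- Points of the plane. -/
abbrev Pt : Type := ℝ × ℝ

/-- The orientation determinant of the triple `(a, b, c)`:
`c` lies strictly to the left of the directed line from `a` to `b` iff `orient a b c > 0`. -/
def orient (a b c : Pt) : ℝ :=
  (b.1 - a.1) * (c.2 - a.2) - (b.2 - a.2) * (c.1 - a.1)

/-- A set of points is in general position if no three pairwise distinct points are collinear. -/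
def GenPos (X : Set Pt) : Prop :=
  ∀ a ∈ X, ∀ b ∈ X, ∀ c ∈ X, a ≠ b → a ≠ c → b ≠ c → orient a b c ≠ 0

/-- The set of extreme points of the convex hull of `S`. -/
def extremePts (S : Set Pt) : Set Pt := Set.extremePoints ℝ (convexHull ℝ S)

/-- Remove the extreme points of the convex hull (one peeling step of convex layers). -/
def peel (S : Set Pt) : Set Pt := S \ extremePts S

/-- `X` has exactly `k` convex layers. -/
def HasLayers (X : Set Pt) (k : ℕ) : Prop :=
  peel^[k] X = ∅ ∧ ∀ j < k, peel^[j] X ≠ ∅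

/-- `X_j`, the union of the `j` innermost convex layers (when `X` has `k` layers). -/
def layerSub (X : Set Pt) (k j : ℕ) : Set Pt := peel^[k - j] X

/-- `R_j`, the `j`-th convex layer of `X` (when `X` has `k` layers), `R_1` innermost. -/
def layer (X : Set Pt) (k j : ℕ) : Set Pt := extremePts (layerSub X k j)

/-- `X` is a nested almost convex set. -/
def IsNACS (X : Set Pt) : Prop :=
  X.Finite ∧ X.Nonempty ∧ GenPos X ∧
  ∀ k, HasLayers X k →
    ∀ j, 1 ≤ j → j ≤ k →
      ∀ a ∈ layer X k j, ∀ b ∈ layer X k j, ∀ c ∈ layer X k j,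
        a ≠ b → a ≠ c → b ≠ c →
        ∃! p : Pt, p ∈ layerSub X k (j - 1) ∩ interior (convexHull ℝ ({a, b, c} : Set Pt))

/-- `q` is a counterclockwise enumeration of `S`. -/
def CCWEnum {m : ℕ} (S : Set Pt) (q : Fin m → Pt) : Prop :=
  Function.Injective q ∧ Set.range q = S ∧
  ∀ a b c : Fin m, a < b → b < c → 0 < orient (q a) (q b) (q c)

/-- The ordered pair `(q1, q2)` of points of `R` is adoptable from `p`. -/
def AdoptablePair (R : Set Pt) (p q1 q2 : Pt) : Prop :=
  ∀ q3 ∈ R \ ({q1, q2} : Set Pt), p ∈ interior (convexHull ℝ ({q1, q2, q3} : Set Pt))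

/-- The `i`-th binary string of length `j` in lexicographic order (`false` before `true`). -/
def strOfNat (j i : ℕ) : List Bool :=
  (List.range j).map fun t => i.testBit (j - 1 - t)

/-- The numeric (lexicographic) rank of a binary string among strings of its length. -/
def natOfStr (s : List Bool) : ℕ := s.foldl (fun n b => 2 * n + b.toNat) 0

/-- The leftmost `k`-level descendant of the node `s`. -/
def firstStr (k : ℕ) (s : List Bool) : List Bool := s ++ List.replicate (k - s.length) false

/-- The rightmost `k`-level descendant of the node `s`. -/
def lastStr (k : ℕ) (s : List Bool) : List Bool := s ++ List.replicate (k - s.length) true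

/-- Non-root nodes of the tree `T₁(k)`: binary strings of length `1..k`. -/
def ValidNode1 (k : ℕ) (s : List Bool) : Prop := 1 ≤ s.length ∧ s.length ≤ k

/-- A type-1 labeling of `X`, given by its label function `x` (the inverse of `ψ`). -/
def IsLabeling1 (k : ℕ) (X : Set Pt) (x : List Bool → Pt) : Prop :=
  Set.InjOn x {s | ValidNode1 k s} ∧ x '' {s | ValidNode1 k s} = X

/-- A type-1 labeling is nested. -/
def Nested1 (k : ℕ) (X : Set Pt) (x : List Bool → Pt) : Prop :=
  ∀ j, 1 ≤ j → j ≤ k →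
    CCWEnum (layer X k j) fun i : Fin (2 ^ j) => x (strOfNat j i.val)

/-- A type-1 labeling is adoptable. -/
def Adoptable1 (k : ℕ) (X : Set Pt) (x : List Bool → Pt) : Prop :=
  ∀ s : List Bool, 1 ≤ s.length → s.length + 1 ≤ k →
    AdoptablePair (layer X k (s.length + 1)) (x s) (x (s ++ [false])) (x (s ++ [true]))

/-- `previous[R_k(u)]` for a type-1 labeling: the cyclic predecessor (in the left-to-right,
i.e. counterclockwise, order of the `k`-level) of `first[R_k(u)]`. -/
def prev1 (k : ℕ) (x : List Bool → Pt) (s : List Bool) : Pt :=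
  x (strOfNat k ((natOfStr (firstStr k s) + (2 ^ k - 1)) % 2 ^ k))

/-- `next[R_k(u)]` for a type-1 labeling: the cyclic successor of `last[R_k(u)]`. -/
def next1 (k : ℕ) (x : List Bool → Pt) (s : List Bool) : Pt :=
  x (strOfNat k ((natOfStr (lastStr k s) + 1) % 2 ^ k))

/-- A type-1 labeling is well laid. -/
def WellLaid1 (k : ℕ) (x : List Bool → Pt) : Prop :=
  ∀ s : List Bool, 1 ≤ s.length → s.length ≤ k →
    x s ∈ convexHull ℝ ({prev1 k x s, x (firstStr k s), x (lastStr k s)} : Set Pt) ∧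
    x s ∈ convexHull ℝ ({x (firstStr k s), x (lastStr k s), next1 k x s} : Set Pt)

/-- `X_u` for a type-1 labeling: the labels of the proper descendants of `s`. -/
def descSet1 (k : ℕ) (x : List Bool → Pt) (s : List Bool) : Set Pt :=
  x '' {t | ValidNode1 k t ∧ s <+: t ∧ s ≠ t}

/-- `X̄_u = X_u ∪ {x_u}` for a type-1 labeling. -/
def barSet1 (k : ℕ) (x : List Bool → Pt) (s : List Bool) : Set Pt :=
  insert (x s) (descSet1 k x s)

/-- A type-1 labeling is an internal separation. -/
def InternalSep1 (k : ℕ) (X : Set Pt) (x : List Bool → Pt) : Prop :=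
  ∀ s : List Bool, s.length + 1 ≤ k →
    ∀ y ∈ X \ descSet1 k x s,
      ∀ a ∈ barSet1 k x (s ++ [false]), ∀ b ∈ barSet1 k x (s ++ [true]),
        0 < orient a b y

/-- A type-1 labeling is an external separation. -/
def ExternalSep1 (k : ℕ) (X : Set Pt) (x : List Bool → Pt) : Prop :=
  ∀ s : List Bool, 1 ≤ s.length → s.length + 1 ≤ k →
    ∀ y ∈ X \ barSet1 k x s,
      (∀ a ∈ barSet1 k x (s ++ [false]), 0 < orient a (x s) y) ∧
      (∀ b ∈ barSet1 k x (s ++ [true]), 0 < orient (x s) b y)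

/-- Nodes of the tree `T₂(k)`: the root `none`, and pairs `(c, s)`. -/
abbrev Node2 : Type := Option (Fin 3 × List Bool)

/-- Valid nodes of `T₂(k)`: the root, and pairs `(c, s)` with `|s| ≤ k - 2`. -/
def ValidNode2 (k : ℕ) : Node2 → Prop
  | none => True
  | some (_, s) => s.length + 2 ≤ k

/-- A type-2 labeling of `X`, given by its label function `x` (the inverse of `ψ`). -/
def IsLabeling2 (k : ℕ) (X : Set Pt) (x : Node2 → Pt) : Prop :=
  Set.InjOn x {u | ValidNode2 k u} ∧ x '' {u | ValidNode2 k u} = X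

/-- The `i`-th node (left-to-right) of the `(j+2)`-level of `T₂(k)`. -/
def node2At (j i : ℕ) : Node2 :=
  some (⟨i / 2 ^ j % 3, by omega⟩, strOfNat j (i % 2 ^ j))

/-- A type-2 labeling is nested. -/
def Nested2 (k : ℕ) (X : Set Pt) (x : Node2 → Pt) : Prop :=
  CCWEnum (layer X k 1) (fun _ : Fin 1 => x none) ∧
  ∀ j : ℕ, j + 2 ≤ k →
    CCWEnum (layer X k (j + 2)) fun i : Fin (3 * 2 ^ j) => x (node2At j i.val)

/-- A type-2 labeling is adoptable. -/
def Adoptable2 (k : ℕ) (X : Set Pt) (x : Node2 → Pt) : Prop :=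
  ∀ (c : Fin 3) (s : List Bool), s.length + 3 ≤ k →
    AdoptablePair (layer X k (s.length + 3)) (x (some (c, s)))
      (x (some (c, s ++ [false]))) (x (some (c, s ++ [true])))

/-- `previous[R_k(u)]` for a type-2 labeling, `u = (c, s)`. -/
def prev2 (k : ℕ) (x : Node2 → Pt) (c : Fin 3) (s : List Bool) : Pt :=
  x (node2At (k - 2)
      ((c.val * 2 ^ (k - 2) + natOfStr (firstStr (k - 2) s) + (3 * 2 ^ (k - 2) - 1)) %
        (3 * 2 ^ (k - 2))))

/-- `next[R_k(u)]` for a type-2 labeling, `u = (c, s)`. -/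
def next2 (k : ℕ) (x : Node2 → Pt) (c : Fin 3) (s : List Bool) : Pt :=
  x (node2At (k - 2)
      ((c.val * 2 ^ (k - 2) + natOfStr (lastStr (k - 2) s) + 1) % (3 * 2 ^ (k - 2))))

/-- A type-2 labeling is well laid (the root is the only node with `R_k(u) = R_k`). -/
def WellLaid2 (k : ℕ) (x : Node2 → Pt) : Prop :=
  ∀ (c : Fin 3) (s : List Bool), s.length + 2 ≤ k →
    x (some (c, s)) ∈ convexHull ℝ
      ({prev2 k x c s, x (some (c, firstStr (k - 2) s)),
        x (some (c, lastStr (k - 2) s))} : Set Pt) ∧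
    x (some (c, s)) ∈ convexHull ℝ
      ({x (some (c, firstStr (k - 2) s)), x (some (c, lastStr (k - 2) s)),
        next2 k x c s} : Set Pt)

/-- `X_u` for a type-2 labeling and a non-root node `u = (c, s)`. -/
def descSet2 (k : ℕ) (x : Node2 → Pt) (c : Fin 3) (s : List Bool) : Set Pt :=
  x '' {u | ∃ t : List Bool, u = some (c, t) ∧ t.length + 2 ≤ k ∧ s <+: t ∧ s ≠ t}

/-- `X̄_u = X_u ∪ {x_u}` for a type-2 labeling and a non-root node `u = (c, s)`. -/
def barSet2 (k : ℕ) (x : Node2 → Pt) (c : Fin 3) (s : List Bool) : Set Pt :=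
  insert (x (some (c, s))) (descSet2 k x c s)

/-- A type-2 labeling is an internal separation. -/
def InternalSep2 (k : ℕ) (X : Set Pt) (x : Node2 → Pt) : Prop :=
  (∀ (c : Fin 3) (s : List Bool), s.length + 3 ≤ k →
    ∀ y ∈ X \ descSet2 k x c s,
      ∀ a ∈ barSet2 k x c (s ++ [false]), ∀ b ∈ barSet2 k x c (s ++ [true]),
        0 < orient a b y) ∧
  (∀ i : Fin 3,
    ∀ y ∈ X \ (barSet2 k x i [] ∪ barSet2 k x (i + 1) []),
      ∀ a ∈ barSet2 k x i [], ∀ b ∈ barSet2 k x (i + 1) [],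
        0 < orient a b y)

/-- A type-2 labeling is an external separation. -/
def ExternalSep2 (k : ℕ) (X : Set Pt) (x : Node2 → Pt) : Prop :=
  ∀ (c : Fin 3) (s : List Bool), s.length + 3 ≤ k →
    ∀ y ∈ X \ barSet2 k x c s,
      (∀ a ∈ barSet2 k x c (s ++ [false]), 0 < orient a (x (some (c, s))) y) ∧
      (∀ b ∈ barSet2 k x c (s ++ [true]), 0 < orient (x (some (c, s))) b y)

/-- One corner-refinement step: from `α_s = (q, o, p)` to `α_{s0}` (for `b = false`)
or `α_{s1}` (for `b = true`). -/
def cornerStep (α : Pt × Pt × Pt) (b : Bool) : Pt × Pt × Pt :=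
  let q := α.1
  let o := α.2.1
  let p := α.2.2
  if b then (o + (1 / 5 : ℝ) • (q - o), o + (1 / 5 : ℝ) • (p - o), o + (2 / 5 : ℝ) • (p - o))
  else (o + (2 / 5 : ℝ) • (q - o), o + (1 / 5 : ℝ) • (q - o), o + (1 / 5 : ℝ) • (p - o))

/-- The corner `α_s = (q_s, o_s, p_s)` assigned to the binary string `s` (with parameter `k`). -/
def corner (k : ℕ) (s : List Bool) : Pt × Pt × Pt :=
  s.foldl cornerStep
    (((0 : ℝ), (2 * 5 ^ (k + 1) : ℝ)), ((0 : ℝ), (0 : ℝ)), ((2 * 5 ^ (k + 1) : ℝ), (0 : ℝ)))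

/-- The point `y_v` for a binary string `v = s ++ [b]` of positive length. -/
def ypt (k : ℕ) (v : List Bool) : Pt :=
  let α := corner k v.dropLast
  if v.getLastD false then α.2.1 + (1 / 5 : ℝ) • (α.2.2 - α.2.1)
  else α.2.1 + (1 / 5 : ℝ) • (α.1 - α.2.1)

/-- The point `x_s`: the midpoint of `y_{s·0^(k+1−|s|)}` and `y_{s·1^(k+1−|s|)}`. -/
def xpt (k : ℕ) (s : List Bool) : Pt :=
  (1 / 2 : ℝ) •
    (ypt k (s ++ List.replicate (k + 1 - s.length) false) +
      ypt k (s ++ List.replicate (k + 1 - s.length) true))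

lemma orient_rot (a b c : Pt) : orient a b c = orient b c a := by unfold orient; ring
lemma orient_swap (a b c : Pt) : orient a b c = - orient a c b := by unfold orient; ring
lemma orient_self₁₂ (a b : Pt) : orient a a b = 0 := by unfold orient; ring
lemma orient_self₁₃ (a b : Pt) : orient a b a = 0 := by unfold orient; ring
lemma orient_self₂₃ (a b : Pt) : orient a b b = 0 := by unfold orient; ring

lemma orient_comb (u w x y : Pt) (a b : ℝ) (hab : a + b = 1) :
    orient u w (a • x + b • y) = a * orient u w x + b * orient u w y := by
  have hb : b = 1 - a := by linarith
  subst hb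
  simp [orient, Prod.smul_fst, Prod.smul_snd, smul_eq_mul]
  ring

lemma orient_bary_fst (a b c z : Pt) :
    orient z b c * a.1 + orient a z c * b.1 + orient a b z * c.1 = orient a b c * z.1 := by
  simp [orient]; ring

lemma orient_bary_snd (a b c z : Pt) :
    orient z b c * a.2 + orient a z c * b.2 + orient a b z * c.2 = orient a b c * z.2 := by
  simp [orient]; ring

lemma orient_bary_sum (a b c z : Pt) :
    orient z b c + orient a z c + orient a b z = orient a b c := by
  simp [orient]; ring

lemma orient_bary (a b c z : Pt) :
    orient z b c • a + orient a z c • b + orient a b z • c = orient a b c • z := by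
  apply Prod.ext <;>
  simp [Prod.smul_fst, Prod.smul_snd, smul_eq_mul, orient_bary_fst, orient_bary_snd]

lemma orient_trans {v a b c : Pt} {t : ℝ}
    (ha : v.1 + t * v.2 < a.1 + t * a.2) (hb : v.1 + t * v.2 < b.1 + t * b.2)
    (hc : v.1 + t * v.2 < c.1 + t * c.2)
    (hab : 0 < orient v a b) (hbc : 0 < orient v b c) : 0 < orient v a c := by
  have key : orient v a c * ((b.1 + t * b.2) - (v.1 + t * v.2))
      = orient v b c * ((a.1 + t * a.2) - (v.1 + t * v.2))
        + orient v a b * ((c.1 + t * c.2) - (v.1 + t * v.2)) := by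
    unfold orient; ring
  nlinarith [mul_pos hbc (by linarith : (0:ℝ) < (a.1 + t * a.2) - (v.1 + t * v.2)),
    mul_pos hab (by linarith : (0:ℝ) < (c.1 + t * c.2) - (v.1 + t * v.2))]


lemma convexHull_orient_nonneg {A : Set Pt} {u w : Pt} (h : ∀ y ∈ A, 0 ≤ orient u w y) :
    ∀ y ∈ convexHull ℝ A, 0 ≤ orient u w y := by
  have hconv : Convex ℝ {y : Pt | 0 ≤ orient u w y} := by
    intro x hx z hz a b ha hb hab
    simp only [mem_setOf_eq] at *
    rw [orient_comb u w x z a b hab]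
    have := mul_nonneg ha hx
    have := mul_nonneg hb hz
    linarith
  exact fun y hy => convexHull_min h hconv hy

lemma mem_convexHull_triple {a b c z : Pt} {wa wb wc : ℝ} (hwa : 0 ≤ wa) (hwb : 0 ≤ wb)
    (hwc : 0 ≤ wc) (hsum : wa + wb + wc = 1) (hz : wa • a + wb • b + wc • c = z) :
    z ∈ convexHull ℝ ({a, b, c} : Set Pt) := by
  have ha : a ∈ convexHull ℝ ({a, b, c} : Set Pt) :=
    subset_convexHull ℝ _ (by simp)
  have hb : b ∈ convexHull ℝ ({a, b, c} : Set Pt) :=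
    subset_convexHull ℝ _ (by simp)
  have hc : c ∈ convexHull ℝ ({a, b, c} : Set Pt) :=
    subset_convexHull ℝ _ (by simp)
  by_cases hμ : wb + wc = 0
  · have hwb0 : wb = 0 := by linarith
    have hwc0 : wc = 0 := by linarith
    have hwa1 : wa = 1 := by linarith
    rw [hwb0, hwc0, hwa1] at hz
    simp at hz
    rwa [← hz]
  · have hμpos : 0 < wb + wc := lt_of_le_of_ne (by linarith) (Ne.symm hμ)
    set m : Pt := (wb / (wb + wc)) • b + (wc / (wb + wc)) • c with hm
    have hmmem : m ∈ convexHull ℝ ({a, b, c} : Set Pt) := by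
      exact (convex_convexHull ℝ _) hb hc (by positivity) (by positivity) (by field_simp)
    have : wa • a + (wb + wc) • m = z := by
      rw [hm, smul_add, smul_smul, smul_smul]
      rw [mul_div_cancel₀ _ (ne_of_gt hμpos), mul_div_cancel₀ _ (ne_of_gt hμpos), ← add_assoc]
      exact hz
    rw [← this]
    exact (convex_convexHull ℝ _) ha hmmem hwa (by linarith) (by linarith)

lemma mem_triangle {a b c z : Pt} (h1 : 0 < orient z b c) (h2 : 0 < orient a z c)
    (h3 : 0 < orient a b z) : z ∈ convexHull ℝ ({a, b, c} : Set Pt) := by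
  have hD : 0 < orient a b c := by
    have := orient_bary_sum a b c z; linarith
  have hb := orient_bary a b c z
  have hz : (orient a b c)⁻¹ • (orient z b c • a + orient a z c • b + orient a b z • c)
      = (orient a b c)⁻¹ • (orient a b c • z) := by rw [hb]
  rw [smul_smul, inv_mul_cancel₀ (ne_of_gt hD), one_smul] at hz
  rw [smul_add, smul_add, smul_smul, smul_smul, smul_smul] at hz
  refine mem_convexHull_triple (wa := (orient a b c)⁻¹ * orient z b c)
    (wb := (orient a b c)⁻¹ * orient a z c) (wc := (orient a b c)⁻¹ * orient a b z)
    (by positivity) (by positivity) (by positivity) ?_ hz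
  have := orient_bary_sum a b c z
  field_simp
  linarith

lemma mem_interior_triangle {a b c z : Pt} (h1 : 0 < orient z b c) (h2 : 0 < orient a z c)
    (h3 : 0 < orient a b z) : z ∈ interior (convexHull ℝ ({a, b, c} : Set Pt)) := by
  have hopen : IsOpen {y : Pt | 0 < orient y b c ∧ 0 < orient a y c ∧ 0 < orient a b y} := by
    have c1 : Continuous fun y : Pt => orient y b c := by unfold orient; fun_prop
    have c2 : Continuous fun y : Pt => orient a y c := by unfold orient; fun_prop
    have c3 : Continuous fun y : Pt => orient a b y := by unfold orient; fun_prop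
    exact ((isOpen_lt continuous_const c1).inter
      ((isOpen_lt continuous_const c2).inter (isOpen_lt continuous_const c3)))
  refine interior_maximal ?_ hopen ⟨h1, h2, h3⟩
  rintro y ⟨hy1, hy2, hy3⟩
  exact mem_triangle hy1 hy2 hy3

lemma orient_eq_zero_of_mem_segment {a b y : Pt} (h : y ∈ segment ℝ a b) :
    orient a b y = 0 := by
  obtain ⟨s, t, hs, ht, hst, rfl⟩ := h
  rw [orient_comb a b a b s t hst]
  have h1 : orient a b a = 0 := by unfold orient; ring
  have h2 : orient a b b = 0 := by unfold orient; ring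
  rw [h1, h2]; ring

lemma convexHull_eq_extremePts {A : Set Pt} (hA : A.Finite) :
    convexHull ℝ (extremePts A) = convexHull ℝ A := by
  have hcomp : IsCompact (convexHull ℝ A) := hA.isCompact_convexHull ℝ
  have h := closure_convexHull_extremePoints hcomp (convex_convexHull ℝ A)
  have hfin : (extremePts A).Finite := hA.subset extremePoints_convexHull_subset
  calc convexHull ℝ (extremePts A) = closure (convexHull ℝ (extremePts A)) :=
        (hfin.isClosed_convexHull ℝ).closure_eq.symm
    _ = convexHull ℝ A := h



lemma convexHull_orient_nonpos {A : Set Pt} {u w : Pt} (h : ∀ y ∈ A, orient u w y ≤ 0) :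
    ∀ y ∈ convexHull ℝ A, orient u w y ≤ 0 := by
  intro y hy
  have h' : ∀ z ∈ A, 0 ≤ orient w u z := by
    intro z hz
    have hswap : orient w u z = - orient u w z := by unfold orient; ring
    rw [hswap]
    linarith [h z hz]
  have := convexHull_orient_nonneg h' y hy
  have hswap : orient w u y = - orient u w y := by unfold orient; ring
  linarith [this]


lemma mem_extremePts_iff {A : Set Pt} {x : Pt} :
    x ∈ extremePts A ↔ x ∈ A ∧ x ∉ convexHull ℝ (A \ {x}) := by
  constructor
  · intro hx
    have hxA : x ∈ A := extremePoints_convexHull_subset hx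
    refine ⟨hxA, fun hmem => ?_⟩
    rw [extremePts, (convex_convexHull ℝ A).mem_extremePoints_iff_mem_diff_convexHull_diff] at hx
    exact hx.2 (convexHull_mono (diff_subset_diff_left (subset_convexHull ℝ A)) hmem)
  · rintro ⟨hxA, hx⟩
    rw [extremePts, mem_extremePoints_iff_forall_segment]
    refine ⟨subset_convexHull ℝ A hxA, ?_⟩
    intro x₁ h₁ x₂ h₂ hseg
    by_cases hAe : (A \ {x}).Nonempty
    · have hins : insert x (A \ {x}) = A := by
        rw [Set.insert_diff_singleton, Set.insert_eq_self.2 hxA]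
      rw [← hins, convexHull_insert hAe] at h₁ h₂
      simp only [mem_convexJoin, mem_singleton_iff] at h₁ h₂
      obtain ⟨x', hx'eq, z₁, hz₁, a₁, b₁, ha₁, hb₁, hab₁, hx₁⟩ := h₁
      obtain ⟨x'', hx''eq, z₂, hz₂, a₂, b₂, ha₂, hb₂, hab₂, hx₂⟩ := h₂
      rw [hx'eq] at hx₁
      rw [hx''eq] at hx₂
      clear hx'eq hx''eq
      obtain ⟨s, t, hs, ht, hst, hxe⟩ := hseg
      set c : ℝ := s * a₁ + t * a₂ with hc
      have hc1 : c ≤ 1 := by nlinarith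
      by_cases hceq : c = 1
      · -- equality case
        have h0 : s * (1 - a₁) + t * (1 - a₂) = 0 := by rw [hc] at hceq; nlinarith
        rcases eq_or_lt_of_le hs with hs0 | hs0
        · have ht1 : t = 1 := by linarith
          have ha2 : t * (1 - a₂) = 0 := by nlinarith
          have : a₂ = 1 := by rw [ht1] at ha2; linarith
          right
          rw [← hx₂, this]
          have : b₂ = 0 := by linarith
          rw [this]; simp
        · have ha1 : s * (1 - a₁) = 0 := by nlinarith
          have : a₁ = 1 := by
            rcases mul_eq_zero.1 ha1 with h | h
            · linarith
            · linarith
          left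
          rw [← hx₁, this]
          have : b₁ = 0 := by linarith
          rw [this]; simp
      · have hclt : c < 1 := lt_of_le_of_ne hc1 hceq
        have hpos : (0:ℝ) < 1 - c := by linarith
        have e : x = c • x + ((s * b₁) • z₁ + (t * b₂) • z₂) := by
          conv_lhs => rw [← hxe, ← hx₁, ← hx₂]
          rw [hc]
          module
        have hkey : x = ((1 - c)⁻¹ * (s * b₁)) • z₁ + ((1 - c)⁻¹ * (t * b₂)) • z₂ := by
          have e2 : (1 - c) • x = (s * b₁) • z₁ + (t * b₂) • z₂ := by
            rw [sub_smul, one_smul]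
            nth_rewrite 1 [e]
            module
          calc x = (1 - c)⁻¹ • ((1 - c) • x) := by
                rw [smul_smul, inv_mul_cancel₀ (ne_of_gt hpos), one_smul]
            _ = _ := by rw [e2, smul_add, smul_smul, smul_smul]
        have hsum : (1 - c)⁻¹ * (s * b₁) + (1 - c)⁻¹ * (t * b₂) = 1 := by
          have : s * b₁ + t * b₂ = 1 - c := by rw [hc]; nlinarith
          field_simp
          linarith
        have : x ∈ segment ℝ z₁ z₂ :=
          ⟨(1 - c)⁻¹ * (s * b₁), (1 - c)⁻¹ * (t * b₂), by positivity, by positivity, hsum,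
            hkey.symm⟩
        exact absurd ((convex_convexHull ℝ _).segment_subset hz₁ hz₂ this) hx
    · have hAx : A = {x} := by
        rw [not_nonempty_iff_eq_empty, diff_eq_empty] at hAe
        exact subset_antisymm hAe (singleton_subset_iff.2 hxA)
      rw [hAx, convexHull_singleton] at h₁
      left; exact h₁

lemma exists_generic_functional (F : Set Pt) (hF : F.Finite) :
    ∃ t : ℝ, ∀ p ∈ F, ∀ q ∈ F, p ≠ q → p.1 + t * p.2 ≠ q.1 + t * q.2 := by
  have hbad : ∀ p q : Pt, p ≠ q → ({t : ℝ | p.1 + t * p.2 = q.1 + t * q.2}).Subsingleton := by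
    intro p q hpq t1 ht1 t2 ht2
    simp only [mem_setOf_eq] at ht1 ht2
    by_cases h2 : p.2 = q.2
    · exfalso
      have h1 : p.1 = q.1 := by rw [h2] at ht1; linarith
      exact hpq (Prod.ext h1 h2)
    · have : (t1 - t2) * (p.2 - q.2) = 0 := by linarith
      rcases mul_eq_zero.1 this with h | h
      · linarith
      · exact absurd (by linarith) h2
  set B : Set ℝ := ⋃ p ∈ F, ⋃ q ∈ F, {t : ℝ | p ≠ q ∧ p.1 + t * p.2 = q.1 + t * q.2} with hB
  have hBfin : B.Finite := by
    apply hF.biUnion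
    intro p _
    apply hF.biUnion
    intro q _
    by_cases hpq : p = q
    · simp [hpq]
    · apply Set.Subsingleton.finite
      intro t1 ht1 t2 ht2
      exact hbad p q hpq ht1.2 ht2.2
  obtain ⟨t, ht⟩ := hBfin.infinite_compl.nonempty
  refine ⟨t, fun p hp q hq hpq heq => ?_⟩
  exact ht (mem_biUnion hp (mem_biUnion hq ⟨hpq, heq⟩))

lemma exists_rel_min (r : Pt → Pt → Prop) (F : Finset Pt)
    (htri : ∀ a ∈ F, ∀ b ∈ F, a ≠ b → r a b ∨ r b a)
    (htrans : ∀ a ∈ F, ∀ b ∈ F, ∀ c ∈ F, r a b → r b c → r a c)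
    (hne : F.Nonempty) : ∃ u ∈ F, ∀ z ∈ F, z ≠ u → r u z := by
  classical
  induction F using Finset.induction_on with
  | empty => exact absurd hne (by simp)
  | @insert a G ha ih =>
    by_cases hG : G.Nonempty
    · obtain ⟨u, hu, hmin⟩ := ih
        (fun x hx y hy => htri x (Finset.mem_insert_of_mem hx) y (Finset.mem_insert_of_mem hy))
        (fun x hx y hy z hz => htrans x (Finset.mem_insert_of_mem hx) y
          (Finset.mem_insert_of_mem hy) z (Finset.mem_insert_of_mem hz)) hG
      have hau : a ≠ u := fun h => ha (h ▸ hu)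
      have hamem : a ∈ insert a G := Finset.mem_insert_self a G
      have humem : u ∈ insert a G := Finset.mem_insert_of_mem hu
      rcases htri a hamem u humem hau with hr | hr
      · refine ⟨a, hamem, fun z hz hza => ?_⟩
        rcases Finset.mem_insert.1 hz with rfl | hzG
        · exact absurd rfl hza
        · by_cases hzu : z = u
          · rwa [hzu]
          · exact htrans a hamem u humem z hz hr (hmin z hzG hzu)
      · refine ⟨u, humem, fun z hz hzu => ?_⟩
        rcases Finset.mem_insert.1 hz with rfl | hzG
        · exact hr
        · exact hmin z hzG hzu
    · rw [Finset.not_nonempty_iff_eq_empty] at hG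
      subst hG
      exact ⟨a, Finset.mem_insert_self a _, fun z hz hza => by
        simp only [Finset.mem_insert, Finset.notMem_empty, or_false] at hz
        exact absurd hz hza⟩


lemma genPos_mono {A B : Set Pt} (h : B ⊆ A) (hA : GenPos A) : GenPos B :=
  fun a ha b hb c hc hab hac hbc => hA a (h ha) b (h hb) c (h hc) hab hac hbc

set_option maxHeartbeats 2000000 in
lemma key (n : ℕ) : ∀ A : Set Pt, A.Finite → GenPos A →
    (∀ a ∈ extremePts A, ∀ b ∈ extremePts A, ∀ c ∈ extremePts A, a ≠ b → a ≠ c → b ≠ c →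
      ∃! p : Pt, p ∈ (A \ extremePts A) ∩ interior (convexHull ℝ ({a, b, c} : Set Pt))) →
    (A \ extremePts A).ncard = n → 1 ≤ n → (extremePts A).ncard = n + 2 := by
  induction n using Nat.strong_induction_on with
  | _ n ih =>
  intro A hAfin hgp H hcard hn
  set R := extremePts A with hR
  have hRA : R ⊆ A := extremePoints_convexHull_subset
  have hRfin : R.Finite := hAfin.subset hRA
  have hDfin : (A \ R).Finite := hAfin.diff
  have hDne : (A \ R).Nonempty := nonempty_of_ncard_ne_zero (by omega)
  have hconvA : convexHull ℝ R = convexHull ℝ A := convexHull_eq_extremePts hAfin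
  -- |R| ≥ 3
  obtain ⟨y0, hy0⟩ := hDne
  have hy0conv : y0 ∈ convexHull ℝ R := by
    rw [hconvA]; exact subset_convexHull ℝ A hy0.1
  have hR3 : 3 ≤ R.ncard := by
    by_contra h3
    push_neg at h3
    interval_cases h : R.ncard
    · rw [ncard_eq_zero hRfin] at h
      rw [h, convexHull_empty] at hy0conv
      exact hy0conv
    · obtain ⟨r, hr⟩ := ncard_eq_one.1 h
      rw [hr, convexHull_singleton, mem_singleton_iff] at hy0conv
      exact hy0.2 (by rw [hr, hy0conv]; exact rfl)
    · obtain ⟨r1, r2, hr12, hr⟩ := ncard_eq_two.1 h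
      rw [hr, convexHull_pair] at hy0conv
      have h0 := orient_eq_zero_of_mem_segment hy0conv
      have hr1A : r1 ∈ A := hRA (by rw [hr]; simp)
      have hr2A : r2 ∈ A := hRA (by rw [hr]; simp)
      have hy0r1 : y0 ≠ r1 := fun hh => hy0.2 (by rw [hh, hr]; simp)
      have hy0r2 : y0 ≠ r2 := fun hh => hy0.2 (by rw [hh, hr]; simp)
      exact hgp r1 hr1A r2 hr2A y0 hy0.1 hr12 (Ne.symm hy0r1) (Ne.symm hy0r2) h0
  -- choose v, u, w
  obtain ⟨t, ht⟩ := exists_generic_functional R hRfin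
  have hRne : R.Nonempty := nonempty_of_ncard_ne_zero (by omega)
  obtain ⟨v, hvR', hvmin⟩ := hRfin.toFinset.exists_min_image (fun p => p.1 + t * p.2)
    (by rwa [Set.Finite.toFinset_nonempty])
  have hvR : v ∈ R := hRfin.mem_toFinset.1 hvR'
  have hvlt : ∀ r ∈ R, r ≠ v → v.1 + t * v.2 < r.1 + t * r.2 := fun r hr hrv =>
    lt_of_le_of_ne (hvmin r (hRfin.mem_toFinset.2 hr)) (ht v hvR r hr (Ne.symm hrv))
  have hRvfin : (R \ {v}).Finite := hRfin.diff
  have hRvcard : (R \ {v}).ncard = R.ncard - 1 := ncard_diff_singleton_of_mem hvR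
  have hRvne : (R \ {v}).Nonempty := nonempty_of_ncard_ne_zero (by omega)
  have hmemRv : ∀ z, z ∈ hRvfin.toFinset ↔ (z ∈ R ∧ z ≠ v) := by
    intro z; rw [hRvfin.mem_toFinset, mem_diff, mem_singleton_iff]
  have htri : ∀ a ∈ hRvfin.toFinset, ∀ b ∈ hRvfin.toFinset, a ≠ b →
      (0 < orient v a b) ∨ (0 < orient v b a) := by
    intro a ha b hb hab
    rw [hmemRv] at ha hb
    have hne := hgp v (hRA hvR) a (hRA ha.1) b (hRA hb.1) (Ne.symm ha.2) (Ne.symm hb.2) hab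
    rcases lt_or_gt_of_ne hne with h | h
    · right
      have : orient v b a = - orient v a b := by unfold orient; ring
      rw [this]; linarith
    · left; exact h
  obtain ⟨u, hu', humin⟩ := exists_rel_min (fun a b => 0 < orient v a b) hRvfin.toFinset htri
    (by
      intro a ha b hb c hc h1 h2
      rw [hmemRv] at ha hb hc
      exact orient_trans (hvlt a ha.1 ha.2) (hvlt b hb.1 hb.2) (hvlt c hc.1 hc.2) h1 h2)
    (by rw [Set.Finite.toFinset_nonempty]; exact hRvne)
  obtain ⟨w, hw', hwmax⟩ := exists_rel_min (fun a b => 0 < orient v b a) hRvfin.toFinset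
    (by intro a ha b hb hab; rcases htri a ha b hb hab with h | h
        · right; exact h
        · left; exact h)
    (by
      intro a ha b hb c hc h1 h2
      rw [hmemRv] at ha hb hc
      exact orient_trans (hvlt c hc.1 hc.2) (hvlt b hb.1 hb.2) (hvlt a ha.1 ha.2) h2 h1)
    (by rw [Set.Finite.toFinset_nonempty]; exact hRvne)
  have hu : u ∈ R \ {v} := hRvfin.mem_toFinset.1 hu'
  have hw : w ∈ R \ {v} := hRvfin.mem_toFinset.1 hw'
  have huR : u ∈ R := hu.1
  have hwR : w ∈ R := hw.1
  have hvu : v ≠ u := fun h => (mem_diff _ |>.1 hu).2 (by rw [← h]; exact rfl)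
  have hvw : v ≠ w := fun h => (mem_diff _ |>.1 hw).2 (by rw [← h]; exact rfl)
  have humin' : ∀ z ∈ R \ {v}, z ≠ u → 0 < orient v u z := fun z hz hzu =>
    humin z (hRvfin.mem_toFinset.2 hz) hzu
  have hwmax' : ∀ z ∈ R \ {v}, z ≠ w → 0 < orient v z w := fun z hz hzw =>
    hwmax z (hRvfin.mem_toFinset.2 hz) hzw
  have huw : u ≠ w := by
    intro h
    obtain ⟨z, hz, hzu⟩ := exists_ne_of_one_lt_ncard (by omega : 1 < (R \ {v}).ncard) u
    have h1 := humin' z hz hzu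
    have h2 := hwmax' z hz (by rw [← h]; exact hzu)
    rw [← h] at h2
    have : orient v z u = - orient v u z := by unfold orient; ring
    rw [this] at h2
    linarith
  have hD : 0 < orient v u w := humin' w hw (Ne.symm huw)
  have hgv : 0 < orient u w v := by rw [← orient_rot]; exact hD
  -- all other extreme points strictly below the chord
  have hgz : ∀ z ∈ R, z ≠ v → z ≠ u → z ≠ w → orient u w z < 0 := by
    intro z hz hzv hzu hzw
    have hne := hgp u (hRA huR) w (hRA hwR) z (hRA hz) huw (Ne.symm hzu) (Ne.symm hzw)
    rcases lt_or_gt_of_ne hne with h | h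
    · exact h
    · exfalso
      have h1 : 0 < orient z u w := by rw [orient_rot]; exact h
      have h2 : 0 < orient v z w := hwmax' z ⟨hz, hzv⟩ hzw
      have h3 : 0 < orient v u z := humin' z ⟨hz, hzv⟩ hzu
      have hmem : z ∈ convexHull ℝ ({v, u, w} : Set Pt) := mem_triangle h1 h2 h3
      have hsub : ({v, u, w} : Set Pt) ⊆ A \ {z} := by
        intro q hq
        rcases hq with rfl | rfl | rfl
        · exact ⟨hRA hvR, by simp [Ne.symm hzv]⟩
        · exact ⟨hRA huR, by simp [Ne.symm hzu]⟩
        · exact ⟨hRA hwR, by simp [Ne.symm hzw]⟩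
      exact (mem_extremePts_iff.1 hz).2 (convexHull_mono hsub hmem)
  -- half plane bounds
  have hgRvle : ∀ r ∈ R \ {v}, orient u w r ≤ 0 := by
    intro r hr
    by_cases hru : r = u
    · rw [hru, orient_self₁₃]
    · by_cases hrw : r = w
      · rw [hrw, orient_self₂₃]
      · exact le_of_lt (hgz r hr.1 hr.2 hru hrw)
  have hh1 : ∀ r ∈ R, 0 ≤ orient v u r := by
    intro r hr
    by_cases hrv : r = v
    · rw [hrv, orient_self₁₃]
    · by_cases hru : r = u
      · rw [hru, orient_self₂₃]
      · exact le_of_lt (humin' r ⟨hr, hrv⟩ hru)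
  have hh2 : ∀ r ∈ R, 0 ≤ orient w v r := by
    intro r hr
    by_cases hrv : r = v
    · rw [hrv, orient_self₂₃]
    · by_cases hrw : r = w
      · rw [hrw, orient_self₁₃]
      · rw [orient_rot]
        exact le_of_lt (hwmax' r ⟨hr, hrv⟩ hrw)
  have hwvu : 0 < orient w v u := by rw [orient_rot]; exact hD
  have hH1 := convexHull_orient_nonneg hh1
  have hH2 := convexHull_orient_nonneg hh2
  -- crossing lemma
  have hcross : ∀ m ∈ convexHull ℝ R, orient u w m = 0 → m ∈ segment ℝ u w := by
    intro m hm hg0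
    have h1m := hH1 m hm
    have h2m := hH2 m hm
    have hcol : (w.1 - u.1) * (m.2 - u.2) = (w.2 - u.2) * (m.1 - u.1) := by
      unfold orient at hg0; linarith
    have huwne : u ≠ w := huw
    obtain ⟨τ, hτ⟩ : ∃ τ : ℝ, m = (1 - τ) • u + τ • w := by
      by_cases hx1 : w.1 - u.1 = 0
      · have hy1 : w.2 - u.2 ≠ 0 := by
          intro hy
          exact huwne (Prod.ext (by linarith) (by linarith))
        refine ⟨(m.2 - u.2) / (w.2 - u.2), Prod.ext ?_ ?_⟩
        · simp only [Prod.fst_add, Prod.smul_fst, smul_eq_mul]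
          have : (w.2 - u.2) * (m.1 - u.1) = 0 := by rw [← hcol, hx1]; ring
          have hmu1 : m.1 = u.1 := by
            rcases mul_eq_zero.1 this with h | h
            · exact absurd h hy1
            · linarith
          rw [hmu1]
          field_simp
          linarith
        · simp only [Prod.snd_add, Prod.smul_snd, smul_eq_mul]
          field_simp
          ring
      · refine ⟨(m.1 - u.1) / (w.1 - u.1), Prod.ext ?_ ?_⟩
        · simp only [Prod.fst_add, Prod.smul_fst, smul_eq_mul]
          field_simp
          ring
        · simp only [Prod.snd_add, Prod.smul_snd, smul_eq_mul]
          field_simp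
          linear_combination hcol
    have e1 : orient v u m = (1 - τ) * orient v u u + τ * orient v u w := by
      rw [hτ, orient_comb v u u w (1 - τ) τ (by ring)]
    rw [orient_self₂₃] at e1
    have hτ0 : 0 ≤ τ := by nlinarith [h1m, e1, hD]
    have e2 : orient w v m = (1 - τ) * orient w v u + τ * orient w v w := by
      rw [hτ, orient_comb w v u w (1 - τ) τ (by ring)]
    rw [orient_self₁₃] at e2
    have hτ1 : τ ≤ 1 := by nlinarith [h2m, e2, hwvu]
    exact ⟨1 - τ, τ, by linarith, hτ0, by ring, hτ.symm⟩
  -- decomposition of the hull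
  have hRins : insert v (R \ {v}) = R := by
    rw [Set.insert_diff_singleton, Set.insert_eq_self.2 hvR]
  have hdecomp : ∀ y ∈ convexHull ℝ R, ∃ a : ℝ, ∃ z : Pt, 0 ≤ a ∧ a ≤ 1 ∧
      z ∈ convexHull ℝ (R \ {v}) ∧ y = a • v + (1 - a) • z := by
    intro y hy
    rw [← hRins, convexHull_insert hRvne] at hy
    simp only [mem_convexJoin, mem_singleton_iff] at hy
    obtain ⟨v', hv'eq, z, hz, a, b, ha, hb, hab, hyeq⟩ := hy
    rw [hv'eq] at hyeq
    refine ⟨a, z, ha, by linarith, hz, ?_⟩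
    rw [← hyeq, show (1 : ℝ) - a = b by linarith]
  have hgRv' : ∀ y ∈ convexHull ℝ (R \ {v}), orient u w y ≤ 0 :=
    convexHull_orient_nonpos hgRvle
  -- the two sides of the chord
  have hS1 : ∀ y ∈ convexHull ℝ R, orient u w y ≤ 0 → y ∈ convexHull ℝ (R \ {v}) := by
    intro y hy hgy
    obtain ⟨a, z, ha, ha1, hz, hyeq⟩ := hdecomp y hy
    have hgz' : orient u w z ≤ 0 := hgRv' z hz
    rcases eq_or_lt_of_le ha with ha0 | hapos
    · rw [hyeq, ← ha0]; simpa using hz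
    · have hgy' : orient u w y = a * orient u w v + (1 - a) * orient u w z := by
        rw [hyeq, orient_comb u w v z a (1 - a) (by ring)]
      have hgzlt : orient u w z < 0 := by nlinarith
      set cc : ℝ := (- orient u w z) / (orient u w v - orient u w z) with hcc
      have hden : 0 < orient u w v - orient u w z := by linarith
      have hccpos : 0 < cc := div_pos (by linarith) hden
      have hcclt : cc < 1 := by rw [hcc, div_lt_one hden]; linarith
      have hcc0 : cc ≠ 0 := ne_of_gt hccpos
      set m : Pt := cc • v + (1 - cc) • z with hm
      have hgm : orient u w m = 0 := by
        rw [hm, orient_comb u w v z cc (1 - cc) (by ring), hcc]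
        field_simp
        ring
      have hmR : m ∈ convexHull ℝ R := by
        have hvhull : v ∈ convexHull ℝ R := subset_convexHull ℝ R hvR
        have hzhull : z ∈ convexHull ℝ R := convexHull_mono diff_subset hz
        rw [hm]
        exact (convex_convexHull ℝ R) hvhull hzhull (le_of_lt hccpos) (by linarith) (by ring)
      have hmseg := hcross m hmR hgm
      have hmRv : m ∈ convexHull ℝ (R \ {v}) :=
        segment_subset_convexHull (mem_diff _ |>.2 ⟨huR, hu.2⟩) (mem_diff _ |>.2 ⟨hwR, hw.2⟩) hmseg
      have hac : a ≤ cc := by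
        rw [hcc, le_div_iff₀ hden]
        nlinarith
      have hyeq2 : y = (a / cc) • m + (1 - a / cc) • z := by
        rw [hyeq, hm]
        apply Prod.ext
        · simp only [Prod.fst_add, Prod.smul_fst, smul_eq_mul]
          field_simp
          ring
        · simp only [Prod.snd_add, Prod.smul_snd, smul_eq_mul]
          field_simp
          ring
      have hyseg : y ∈ segment ℝ m z := by
        refine ⟨a / cc, 1 - a / cc, by positivity, ?_, by ring, hyeq2.symm⟩
        have : a / cc ≤ 1 := (div_le_one hccpos).2 hac
        linarith
      exact (convex_convexHull ℝ _).segment_subset hmRv hz hyseg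
  have hTsub : segment ℝ u w ⊆ convexHull ℝ ({v, u, w} : Set Pt) :=
    segment_subset_convexHull (by simp) (by simp)
  have hvT : v ∈ convexHull ℝ ({v, u, w} : Set Pt) := subset_convexHull ℝ _ (by simp)
  have hS2 : ∀ y ∈ convexHull ℝ R, 0 < orient u w y →
      y ∈ convexHull ℝ ({v, u, w} : Set Pt) := by
    intro y hy hgy
    obtain ⟨a, z, ha, ha1, hz, hyeq⟩ := hdecomp y hy
    have hgz' : orient u w z ≤ 0 := hgRv' z hz
    have hgy' : orient u w y = a * orient u w v + (1 - a) * orient u w z := by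
      rw [hyeq, orient_comb u w v z a (1 - a) (by ring)]
    have hapos : 0 < a := by nlinarith
    rcases eq_or_lt_of_le hgz' with hgz0 | hgzlt
    · have hzR : z ∈ convexHull ℝ R := convexHull_mono diff_subset hz
      have hzseg := hcross z hzR hgz0
      have hzT : z ∈ convexHull ℝ ({v, u, w} : Set Pt) := hTsub hzseg
      rw [hyeq]
      exact (convex_convexHull ℝ _) hvT hzT ha (by linarith) (by ring)
    · set cc : ℝ := (- orient u w z) / (orient u w v - orient u w z) with hcc
      have hden : 0 < orient u w v - orient u w z := by linarith
      have hccpos : 0 < cc := div_pos (by linarith) hden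
      have hcclt : cc < 1 := by rw [hcc, div_lt_one hden]; linarith
      have hcc0 : cc ≠ 0 := ne_of_gt hccpos
      have hcc1 : (1 : ℝ) - cc ≠ 0 := by linarith
      set m : Pt := cc • v + (1 - cc) • z with hm
      have hgm : orient u w m = 0 := by
        rw [hm, orient_comb u w v z cc (1 - cc) (by ring), hcc]
        field_simp
        ring
      have hmR : m ∈ convexHull ℝ R := by
        have hvhull : v ∈ convexHull ℝ R := subset_convexHull ℝ R hvR
        have hzhull : z ∈ convexHull ℝ R := convexHull_mono diff_subset hz
        rw [hm]
        exact (convex_convexHull ℝ R) hvhull hzhull (le_of_lt hccpos) (by linarith) (by ring)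
      have hmseg := hcross m hmR hgm
      have hmT : m ∈ convexHull ℝ ({v, u, w} : Set Pt) := hTsub hmseg
      have hca : cc < a := by
        rw [hcc, div_lt_iff₀ hden]
        nlinarith
      have hyeq2 : y = ((a - cc) / (1 - cc)) • v + (1 - (a - cc) / (1 - cc)) • m := by
        rw [hyeq, hm]
        apply Prod.ext
        · simp only [Prod.fst_add, Prod.smul_fst, smul_eq_mul]
          field_simp
          ring
        · simp only [Prod.snd_add, Prod.smul_snd, smul_eq_mul]
          field_simp
          ring
      have hyseg : y ∈ segment ℝ v m := by
        refine ⟨(a - cc) / (1 - cc), 1 - (a - cc) / (1 - cc),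
          div_nonneg (by linarith) (by linarith), ?_, by ring,
          hyeq2.symm⟩
        have : (a - cc) / (1 - cc) ≤ 1 := by
          rw [div_le_one (by linarith)]; linarith
        linarith
      exact (convex_convexHull ℝ _).segment_subset hvT hmT hyseg
  -- the unique point in the ear triangle
  obtain ⟨p, hp, hpuniq⟩ := H v hvR u huR w hwR hvu hvw huw
  have hpAR : p ∈ A \ R := hp.1
  have hpint : p ∈ interior (convexHull ℝ ({v, u, w} : Set Pt)) := hp.2
  have hpA : p ∈ A := hpAR.1
  have hpR : p ∉ R := hpAR.2
  have hpv : p ≠ v := fun h => hpR (h ▸ hvR)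
  have hpu : p ≠ u := fun h => hpR (h ▸ huR)
  have hpw : p ≠ w := fun h => hpR (h ▸ hwR)
  have hTnonneg : ∀ y ∈ convexHull ℝ ({v, u, w} : Set Pt), 0 ≤ orient u w y := by
    apply convexHull_orient_nonneg
    intro y hy
    rcases hy with rfl | rfl | rfl
    · exact le_of_lt hgv
    · rw [orient_self₁₃]
    · rw [orient_self₂₃]
  have hgp_pos : 0 < orient u w p := by
    have h0 : 0 ≤ orient u w p := hTnonneg p (interior_subset hpint)
    have hne := hgp u (hRA huR) w (hRA hwR) p hpA huw (Ne.symm hpu) (Ne.symm hpw)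
    exact lt_of_le_of_ne h0 (Ne.symm hne)
  -- all other non-extreme points are strictly below the chord
  have huniqneg : ∀ y ∈ A \ R, y ≠ p → orient u w y < 0 := by
    intro y hy hyp
    have hyA : y ∈ A := hy.1
    have hyR : y ∉ R := hy.2
    have hyv : y ≠ v := fun h => hyR (h ▸ hvR)
    have hyu : y ≠ u := fun h => hyR (h ▸ huR)
    have hyw : y ≠ w := fun h => hyR (h ▸ hwR)
    have hne := hgp u (hRA huR) w (hRA hwR) y hyA huw (Ne.symm hyu) (Ne.symm hyw)
    rcases lt_or_gt_of_ne hne with h | h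
    · exact h
    · exfalso
      have hyconv : y ∈ convexHull ℝ R := by rw [hconvA]; exact subset_convexHull ℝ A hyA
      have hyT : y ∈ convexHull ℝ ({v, u, w} : Set Pt) := hS2 y hyconv h
      -- upgrade to interior
      have hvu1 : ∀ q ∈ ({v, u, w} : Set Pt), 0 ≤ orient v u q := by
        intro q hq
        rcases hq with rfl | rfl | rfl
        · rw [orient_self₁₃]
        · rw [orient_self₂₃]
        · exact le_of_lt hD
      have hwv1 : ∀ q ∈ ({v, u, w} : Set Pt), 0 ≤ orient w v q := by
        intro q hq
        rcases hq with rfl | rfl | rfl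
        · rw [orient_self₂₃]
        · exact le_of_lt hwvu
        · rw [orient_self₁₃]
      have h3 : 0 < orient v u y := by
        have h0 := convexHull_orient_nonneg hvu1 y hyT
        have hne3 := hgp v (hRA hvR) u (hRA huR) y hyA hvu (Ne.symm hyv) (Ne.symm hyu)
        exact lt_of_le_of_ne h0 (Ne.symm hne3)
      have h2 : 0 < orient v y w := by
        have h0 := convexHull_orient_nonneg hwv1 y hyT
        have hne2 := hgp w (hRA hwR) v (hRA hvR) y hyA (Ne.symm hvw) (Ne.symm hyw) (Ne.symm hyv)
        have : 0 < orient w v y := lt_of_le_of_ne h0 (Ne.symm hne2)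
        rw [orient_rot] at this
        exact this
      have h1 : 0 < orient y u w := by rw [orient_rot]; exact h
      have hyint : y ∈ interior (convexHull ℝ ({v, u, w} : Set Pt)) :=
        mem_interior_triangle h1 h2 h3
      exact hyp (hpuniq y ⟨hy, hyint⟩)
  rcases eq_or_lt_of_le hn with h1 | h2
  · -- base case n = 1
    have hARp : A \ R = {p} := by
      obtain ⟨q, hq⟩ := ncard_eq_one.1 (by omega : (A \ R).ncard = 1)
      have : p ∈ ({q} : Set Pt) := hq ▸ hpAR
      rw [mem_singleton_iff] at this
      rw [hq, this]
    have hRsub : R ⊆ {v, u, w} := by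
      intro z hz
      by_contra hzout
      simp only [mem_insert_iff, mem_singleton_iff, not_or] at hzout
      obtain ⟨hzv, hzu, hzw⟩ := hzout
      obtain ⟨q, hq, _⟩ := H u huR w hwR z hz huw (Ne.symm hzu) (Ne.symm hzw)
      have hqp : q = p := by
        have := hq.1
        rw [hARp, mem_singleton_iff] at this
        exact this
      have hqle : orient u w q ≤ 0 := by
        refine convexHull_orient_nonpos ?_ q (interior_subset hq.2)
        intro r hr
        rcases hr with rfl | rfl | rfl
        · rw [orient_self₁₃]
        · rw [orient_self₂₃]
        · exact le_of_lt (hgz r hz hzv hzu hzw)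
      rw [hqp] at hqle
      linarith
    have hReq : R = {v, u, w} := by
      apply subset_antisymm hRsub
      intro q hq
      rcases hq with rfl | rfl | rfl
      · exact hvR
      · exact huR
      · exact hwR
    have : R.ncard = 3 := by
      rw [hReq]
      exact ncard_eq_three.2 ⟨v, u, w, hvu, hvw, huw, rfl⟩
    omega
  · -- inductive step
    set A' : Set Pt := A \ {v, p} with hA'
    have hA'sub : A' ⊆ A := diff_subset
    have hA'fin : A'.Finite := hAfin.subset hA'sub
    have hgp' : GenPos A' := genPos_mono hA'sub hgp
    have hRvA' : R \ {v} ⊆ A' := by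
      rintro r ⟨hr, hrv⟩
      refine ⟨hRA hr, ?_⟩
      simp only [mem_insert_iff, mem_singleton_iff, not_or]
      exact ⟨fun h => hrv (by simp [h]), fun h => hpR (h ▸ hr)⟩
    have hext' : extremePts A' = R \ {v} := by
      apply subset_antisymm
      · intro x hx
        have hxA' : x ∈ A' := extremePoints_convexHull_subset hx
        by_contra hxout
        have hxv : x ≠ v := by
          intro h
          apply hxA'.2
          simp [h]
        have hxR : x ∉ R := by
          intro h
          exact hxout ⟨h, by simp [hxv]⟩
        have hxp : x ≠ p := by
          intro h
          apply hxA'.2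
          simp [h]
        have hgx : orient u w x < 0 := huniqneg x ⟨hxA'.1, hxR⟩ hxp
        have hxconv : x ∈ convexHull ℝ R := by
          rw [hconvA]; exact subset_convexHull ℝ A hxA'.1
        have hxRv : x ∈ convexHull ℝ (R \ {v}) := hS1 x hxconv (le_of_lt hgx)
        have hsub2 : R \ {v} ⊆ A' \ {x} := by
          intro r hr
          refine ⟨hRvA' hr, ?_⟩
          simp only [mem_singleton_iff]
          intro h
          exact hxout (h ▸ hr)
        exact (mem_extremePts_iff.1 hx).2 (convexHull_mono hsub2 hxRv)
      · intro r hr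
        rw [mem_extremePts_iff]
        refine ⟨hRvA' hr, fun hmem => ?_⟩
        exact (mem_extremePts_iff.1 hr.1).2
          (convexHull_mono (diff_subset_diff_left hA'sub) hmem)
    have hdiff' : A' \ extremePts A' = (A \ R) \ {p} := by
      rw [hext', hA']
      ext q
      simp only [mem_diff, mem_insert_iff, mem_singleton_iff, not_or, not_and, not_not]
      constructor
      · rintro ⟨⟨hqA, hqv, hqp⟩, hq2⟩
        refine ⟨⟨hqA, fun hqR => ?_⟩, hqp⟩
        exact hqv (hq2 hqR)
      · rintro ⟨⟨hqA, hqR⟩, hqp⟩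
        exact ⟨⟨hqA, fun h => hqR (h ▸ hvR), hqp⟩, fun h => absurd h hqR⟩
    have hcard' : (A' \ extremePts A').ncard = n - 1 := by
      rw [hdiff', ncard_diff_singleton_of_mem hpAR, hcard]
    have hH' : ∀ a ∈ extremePts A', ∀ b ∈ extremePts A', ∀ c ∈ extremePts A',
        a ≠ b → a ≠ c → b ≠ c →
        ∃! q : Pt, q ∈ (A' \ extremePts A') ∩
          interior (convexHull ℝ ({a, b, c} : Set Pt)) := by
      intro a ha b hb c hc hab hac hbc
      rw [hext'] at ha hb hc
      obtain ⟨q, hq, hquniq⟩ := H a ha.1 b hb.1 c hc.1 hab hac hbc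
      have hqnotp : q ≠ p := by
        intro hqp
        have hqle : orient u w q ≤ 0 := by
          refine convexHull_orient_nonpos ?_ q (interior_subset hq.2)
          intro r hr
          rcases hr with rfl | rfl | rfl
          · exact hgRvle r ha
          · exact hgRvle r hb
          · exact hgRvle r hc
        rw [hqp] at hqle
        linarith
      refine ⟨q, ⟨?_, hq.2⟩, ?_⟩
      · rw [hdiff']
        exact ⟨hq.1, by simpa using hqnotp⟩
      · intro y hy
        apply hquniq
        have hy1 := hy.1
        rw [hdiff'] at hy1
        exact ⟨hy1.1, hy.2⟩
    have hIH := ih (n - 1) (by omega) A' hA'fin hgp' hH' hcard' (by omega)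
    rw [hext'] at hIH
    have hRcard : (R \ {v}).ncard = R.ncard - 1 := ncard_diff_singleton_of_mem hvR
    omega


/-- For every `1 ≤ j ≤ k−1`, `|R_{j+1}| = |X_j| + 2`. -/
theorem nacs_next_layer_card (X : Set Pt) (hX : IsNACS X) (k : ℕ) (hk : HasLayers X k)
    (j : ℕ) (hj1 : 1 ≤ j) (hjk : j + 1 ≤ k) :
    (layer X k (j + 1)).ncard = (layerSub X k j).ncard + 2 := by
  obtain ⟨hXfin, hXne, hXgp, hprop⟩ := hX
  have hsub : ∀ m, peel^[m] X ⊆ X := by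
    intro m
    induction m with
    | zero => simp
    | succ i ihm =>
      rw [Function.iterate_succ_apply']
      exact Set.diff_subset.trans ihm
  set S : Set Pt := layerSub X k (j + 1) with hS
  have hSX : S ⊆ X := hsub _
  have hSfin : S.Finite := hXfin.subset hSX
  have hSgp : GenPos S := genPos_mono hSX hXgp
  have hpeelS : layerSub X k j = peel S := by
    rw [hS, layerSub, layerSub, show k - j = (k - (j + 1)) + 1 by omega,
      Function.iterate_succ_apply']
  have hne : (peel S).Nonempty := by
    rw [← hpeelS]
    exact Set.nonempty_iff_ne_empty.2 (hk.2 (k - j) (by omega))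
  have hpeelfin : (peel S).Finite := hSfin.subset Set.diff_subset
  have hn1 : 1 ≤ (peel S).ncard := by
    have := (Set.ncard_pos hpeelfin).2 hne
    omega
  have H := hprop k hk (j + 1) (by omega) hjk
  have H' : ∀ a ∈ extremePts S, ∀ b ∈ extremePts S, ∀ c ∈ extremePts S,
      a ≠ b → a ≠ c → b ≠ c →
      ∃! p : Pt, p ∈ (S \ extremePts S) ∩ interior (convexHull ℝ ({a, b, c} : Set Pt)) := by
    intro a ha b hb c hc hab hac hbc
    have h := H a ha b hb c hc hab hac hbc
    rwa [show j + 1 - 1 = j from rfl, hpeelS] at h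
  have hkey := key (peel S).ncard S hSfin hSgp H' rfl hn1
  show (extremePts S).ncard = (layerSub X k j).ncard + 2
  rw [hpeelS]
  exact hkey
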